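/- Let (A_1,...,A_d) be a commuting tuple of N×N complex matrices. For each α = (α_1,...,α_d) ∈ ℂ^d, define the polynomial p_α(z_1,...,z_d) = det(α_1(A_1 − z_1 I) + α_2(A_2 − z_2 I) + ... + α_d(A_d − z_d I)). Then p_α(A_1,...,A_d) = 0 (the zero matrix) for every α ∈ ℂ^d. -/

import Mathlib

open Matrix

/-- Evaluation of a multivariate polynomial at a (commuting) tuple of elements
of a ℂ-algebra, substituting `T j` for the variable `j`. -/
noncomputable def ncEval {d : ℕ} {A : Type*} [Ring A] [Algebra ℂ A]
    (p : MvPolynomial (Fin d) ℂ) (T : Fin d → A) : A :=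
  Finsupp.sum (AddMonoidAlgebra.coeff p) fun m c => c • (List.ofFn fun j : Fin d => T j ^ m j).prod

lemma my_eval_charpoly {N : ℕ} (M : Matrix (Fin N) (Fin N) ℂ) (t : ℂ) :
    M.charpoly.eval t = (t • (1 : Matrix (Fin N) (Fin N) ℂ) - M).det := by
  rw [Matrix.charpoly, ← Polynomial.coe_evalRingHom, RingHom.map_det]
  congr 1
  ext i j
  simp [Matrix.charmatrix_apply, Matrix.diagonal_apply, Matrix.one_apply, apply_ite,
    Matrix.sub_apply, Matrix.smul_apply, smul_eq_mul, mul_ite]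

/-- Multivariate Cayley–Hamilton: the polynomial
`p_α(z) = det (∑ⱼ αⱼ (Aⱼ - zⱼ I))` annihilates the commuting tuple `A`. -/
theorem stmt_3 (d N : ℕ)
    (A : Fin d → Matrix (Fin N) (Fin N) ℂ)
    (hcomm : ∀ i j, Commute (A i) (A j))
    (α : Fin d → ℂ)
    (p : MvPolynomial (Fin d) ℂ)
    (hp : ∀ z : Fin d → ℂ,
      MvPolynomial.eval z p = (∑ j, α j • (A j - z j • (1 : Matrix (Fin N) (Fin N) ℂ))).det) :
    ncEval p A = 0 := by
  classical
  letI S := Algebra.adjoin ℂ (Set.range A)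
  have hc : ∀ a ∈ Set.range A, ∀ b ∈ Set.range A, a * b = b * a := by
    rintro a ⟨i, rfl⟩ b ⟨j, rfl⟩
    exact hcomm i j
  letI hSc : CommRing S :=
    { (inferInstance : Ring S) with
      mul_comm := (Algebra.adjoinCommRingOfComm ℂ hc).mul_comm }
  set T : Fin d → S := fun j => ⟨A j, Algebra.subset_adjoin ⟨j, rfl⟩⟩ with hT
  have hTval : ∀ j, (T j : Matrix (Fin N) (Fin N) ℂ) = A j := fun j => rfl
  have hkey : ∀ q : MvPolynomial (Fin d) ℂ, ncEval q A = S.val (MvPolynomial.aeval T q) := by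
    intro q
    induction q using MvPolynomial.induction_on' with
    | monomial m c =>
      rw [ncEval, MvPolynomial.sum_monomial_eq (by simp), MvPolynomial.aeval_monomial]
      have h1 : (List.ofFn fun j : Fin d => A j ^ m j)
          = (List.ofFn fun j : Fin d => (T j ^ m j : S)).map S.val := by
        simp [List.map_ofFn, Function.comp_def, hTval]
      rw [h1, ← map_list_prod, List.prod_ofFn, _root_.map_mul, ← Finsupp.prod_pow]
      rw [show S.val ((algebraMap ℂ ↥S) c) = algebraMap ℂ _ c from S.val.commutes c,
        ← Algebra.smul_def]
    | add r s hr hs =>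
      rw [ncEval, AddMonoidAlgebra.coeff_add, Finsupp.sum_add_index (by simp) (by intros; rw [add_smul]),
        map_add, _root_.map_add S.val, ← hr, ← hs]
      rfl
  set B : Matrix (Fin N) (Fin N) ℂ := ∑ j, α j • A j with hB
  set q0 : Polynomial ℂ := Polynomial.C ((-1 : ℂ) ^ N) * B.charpoly with hq0
  set s : MvPolynomial (Fin d) ℂ := ∑ j, MvPolynomial.C (α j) * MvPolynomial.X j with hs
  have hpeq : p = Polynomial.aeval s q0 := by
    apply MvPolynomial.funext
    intro z
    rw [hp]
    have heval : ∀ r : MvPolynomial (Fin d) ℂ,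
        MvPolynomial.eval z r = MvPolynomial.aeval z r := by
      intro r
      rw [← MvPolynomial.coe_aeval_eq_eval]
      rfl
    rw [heval, ← Polynomial.aeval_algHom_apply (MvPolynomial.aeval z) s q0]
    have hsz : MvPolynomial.aeval z s = ∑ j, α j * z j := by
      simp [hs]
    rw [hsz]
    rw [show Polynomial.aeval (∑ j, α j * z j) q0 = Polynomial.eval (∑ j, α j * z j) q0 from
      congrFun (Polynomial.coe_aeval_eq_eval _) q0, hq0, Polynomial.eval_mul, Polynomial.eval_C, my_eval_charpoly]
    have hsum : ∑ j, α j • (A j - z j • (1 : Matrix (Fin N) (Fin N) ℂ))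
        = B - (∑ j, α j * z j) • (1 : Matrix (Fin N) (Fin N) ℂ) := by
      rw [hB]
      simp [smul_sub, Finset.sum_sub_distrib, smul_smul, Finset.sum_smul]
    rw [hsum, show B - (∑ j, α j * z j) • (1 : Matrix (Fin N) (Fin N) ℂ)
        = -((∑ j, α j * z j) • (1 : Matrix (Fin N) (Fin N) ℂ) - B) from (neg_sub _ _).symm, Matrix.det_neg]
    simp [mul_comm]
  rw [hpeq, hkey,
    ← Polynomial.aeval_algHom_apply (MvPolynomial.aeval T) s q0,
    ← Polynomial.aeval_algHom_apply S.val (MvPolynomial.aeval T s) q0]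
  have hval : S.val (MvPolynomial.aeval T s) = B := by
    rw [hs, hB]
    simp [Algebra.smul_def, hT]
  rw [hval, hq0, _root_.map_mul, Polynomial.aeval_C, Matrix.aeval_self_charpoly, mul_zero]
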